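/- Let U, V be linear subspaces of a finite-dimensional real Hilbert space X. Then the orthogonal projection onto U ∩ V equals 2·P_U·(P_U + P_V)^†·P_V, where † denotes the Moore–Penrose pseudoinverse (Anderson–Duffin formula). -/

import Mathlib

/-- `B` is the Moore–Penrose (pseudo)inverse of `A`, characterized by the four Penrose
conditions. -/
def IsMoorePenroseInverse {X Y : Type*} [NormedAddCommGroup X] [InnerProductSpace ℝ X]
    [CompleteSpace X] [NormedAddCommGroup Y] [InnerProductSpace ℝ Y] [CompleteSpace Y]
    (A : X →L[ℝ] Y) (B : Y →L[ℝ] X) : Prop :=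
  A ∘L B ∘L A = A ∧ B ∘L A ∘L B = B ∧ IsSelfAdjoint (A ∘L B) ∧ IsSelfAdjoint (B ∘L A)

/-- The orthogonal projection onto a subspace, as an operator `X → X`. -/
noncomputable def proj {X : Type*} [NormedAddCommGroup X] [InnerProductSpace ℝ X]
    (U : Submodule ℝ X) [U.HasOrthogonalProjection] : X →L[ℝ] X :=
  U.subtypeL ∘L U.orthogonalProjectionOnto

open scoped RealInnerProductSpace

section aux

variable {X : Type*} [NormedAddCommGroup X] [InnerProductSpace ℝ X]

lemma proj_mem (U : Submodule ℝ X) [U.HasOrthogonalProjection] (x : X) : proj U x ∈ U :=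
  (U.orthogonalProjectionOnto x).2

lemma proj_eq_self (U : Submodule ℝ X) [U.HasOrthogonalProjection] {x : X} (hx : x ∈ U) :
    proj U x = x :=
  Submodule.starProjection_eq_self_iff.mpr hx

lemma proj_idem (U : Submodule ℝ X) [U.HasOrthogonalProjection] (x : X) :
    proj U (proj U x) = proj U x :=
  proj_eq_self U (proj_mem U x)

set_option synthInstance.maxHeartbeats 1000000 in
lemma proj_sa [FiniteDimensional ℝ X] (U : Submodule ℝ X) :
    IsSelfAdjoint (proj U) :=
  isSelfAdjoint_starProjection U

lemma proj_symm (U : Submodule ℝ X) [U.HasOrthogonalProjection] (x y : X) :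
    ⟪proj U x, y⟫ = ⟪x, proj U y⟫ :=
  Submodule.inner_starProjection_left_eq_right U x y

lemma inner_proj_self (U : Submodule ℝ X) [U.HasOrthogonalProjection] (x : X) :
    ⟪proj U x, x⟫ = ‖proj U x‖ ^ 2 := by
  have h : ⟪x - proj U x, proj U x⟫ = 0 :=
    Submodule.starProjection_inner_eq_zero x (proj U x) (proj_mem U x)
  rw [inner_sub_left] at h
  have h2 : ⟪x, proj U x⟫ = ⟪proj U x, proj U x⟫ := by linarith
  rw [real_inner_comm, h2, real_inner_self_eq_norm_sq]

lemma proj_eq_zero_of_inner_orthogonal (U : Submodule ℝ X) [U.HasOrthogonalProjection] {x : X}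
    (hx : proj U x = 0) {u : X} (hu : u ∈ U) : ⟪x, u⟫ = 0 := by
  have h : ⟪x, u⟫ = ⟪x, proj U u⟫ := by rw [proj_eq_self U hu]
  rw [h, ← proj_symm, hx, inner_zero_left]

end aux

/-- Anderson–Duffin: for linear subspaces `U, V` of a finite-dimensional real
Hilbert space, `P_{U ∩ V} = 2 P_U (P_U + P_V)^† P_V`. -/
theorem stmt2 {X : Type*} [NormedAddCommGroup X] [InnerProductSpace ℝ X]
    [FiniteDimensional ℝ X] (U V : Submodule ℝ X) (B : X →L[ℝ] X)
    (hB : IsMoorePenroseInverse (proj U + proj V) B) :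
    proj (U ⊓ V) = (2 : ℝ) • (proj U ∘L B ∘L proj V) := by
  obtain ⟨hTBT, hBTB, hEsa, hFsa⟩ := hB
  set P := proj U with hPdef
  set Q := proj V with hQdef
  set T : X →L[ℝ] X := P + Q with hTdef
  set E : X →L[ℝ] X := T * B with hEdef
  set F : X →L[ℝ] X := B * T with hFdef
  have hTsa : IsSelfAdjoint T := (proj_sa U).add (proj_sa V)
  have hEsa' : IsSelfAdjoint E := hEsa
  have hFsa' : IsSelfAdjoint F := hFsa
  have hTBT' : T * (B * T) = T := hTBT
  have hBTB' : B * (T * B) = B := hBTB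
  -- kernel of T is contained in U^⊥ and V^⊥
  have hker : ∀ x : X, T x = 0 → P x = 0 ∧ Q x = 0 := by
    intro x hx
    have h0 : ⟪T x, x⟫ = 0 := by rw [hx, inner_zero_left]
    have h1 : ⟪T x, x⟫ = ‖P x‖ ^ 2 + ‖Q x‖ ^ 2 := by
      have hTx : T x = P x + Q x := rfl
      rw [hTx, inner_add_left, inner_proj_self, inner_proj_self]
    have hP0 : ‖P x‖ ^ 2 = 0 := by nlinarith [sq_nonneg ‖P x‖, sq_nonneg ‖Q x‖]
    have hQ0 : ‖Q x‖ ^ 2 = 0 := by nlinarith [sq_nonneg ‖P x‖, sq_nonneg ‖Q x‖]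
    exact ⟨norm_eq_zero.mp (pow_eq_zero_iff two_ne_zero |>.mp hP0),
           norm_eq_zero.mp (pow_eq_zero_iff two_ne_zero |>.mp hQ0)⟩
  have hET : E * T = T := by rw [hEdef, mul_assoc]; exact hTBT'
  have hTF : T * F = T := by rw [hFdef]; exact hTBT'
  have hEE : E * E = E := by
    rw [hEdef, mul_assoc, hBTB']
  have hFF : F * F = F := by
    rw [hFdef, mul_assoc, hTBT']
  have hTE : T * E = T := by
    have := congrArg star hET
    rwa [star_mul, hTsa.star_eq, hEsa'.star_eq] at this
  have hFT : F * T = T := by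
    have := congrArg star hTF
    rwa [star_mul, hTsa.star_eq, hFsa'.star_eq] at this
  -- fixed point lemma: self-adjoint idempotents G with T G = T fix U and V
  have fix : ∀ G : X →L[ℝ] X, IsSelfAdjoint G → T * G = T → G * G = G →
      ∀ v : X, (P v = v ∨ Q v = v) → G v = v := by
    intro G hGsa hTG hGG v hv
    set y := v - G v with hy
    have hTy : T y = 0 := by
      have h := congrFun (congrArg DFunLike.coe hTG) v
      simp only [ContinuousLinearMap.mul_apply] at h
      simp [hy, map_sub, h]
    obtain ⟨hPy, hQy⟩ := hker y hTy
    have h1 : ⟪y, v⟫ = 0 := by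
      rcases hv with h | h
      · rw [← h, ← proj_symm]
        show ⟪P y, v⟫ = 0
        rw [hPy, inner_zero_left]
      · rw [← h, ← proj_symm]
        show ⟪Q y, v⟫ = 0
        rw [hQy, inner_zero_left]
    have h2 : ⟪y, G v⟫ = 0 := by
      have hGy : G y = 0 := by
        have h := congrFun (congrArg DFunLike.coe hGG) v
        simp only [ContinuousLinearMap.mul_apply] at h
        simp [hy, map_sub, h]
      calc (⟪y, G v⟫ : ℝ) = ⟪G y, v⟫ := (hGsa.isSymmetric y v).symm
        _ = 0 := by rw [hGy, inner_zero_left]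
    have hyy : ⟪y, y⟫ = 0 := by
      have hsplit : (⟪y, y⟫ : ℝ) = ⟪y, v⟫ - ⟪y, G v⟫ := by
        nth_rewrite 2 [hy]
        exact inner_sub_right y v (G v)
      rw [hsplit, h1, h2]; ring
    have hy0 : y = 0 := inner_self_eq_zero.mp hyy
    have := sub_eq_zero.mp hy0
    exact this.symm
  have hEfix := fix E hEsa' hTE hEE
  have hFfix := fix F hFsa' hTF hFF
  -- Q ∘ F = Q
  have hFQ : F * Q = Q := by
    ext x
    show F (Q x) = Q x
    exact hFfix (Q x) (Or.inr (proj_idem V x))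
  have hQF : Q * F = Q := by
    have := congrArg star hFQ
    rwa [star_mul, hFsa'.star_eq, (proj_sa V).star_eq] at this
  -- symmetry: P B Q = Q B P pointwise
  have key1 : ∀ x : X, P (B (Q x)) + Q (B (Q x)) = Q x := by
    intro x
    have h := hEfix (Q x) (Or.inr (proj_idem V x))
    have : T (B (Q x)) = Q x := h
    rw [show T (B (Q x)) = P (B (Q x)) + Q (B (Q x)) from rfl] at this
    exact this
  have key2 : ∀ x : X, Q (B (P x)) + Q (B (Q x)) = Q x := by
    intro x
    have h := congrFun (congrArg DFunLike.coe hQF) x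
    simp only [ContinuousLinearMap.mul_apply] at h
    rw [show F x = B (P x + Q x) from rfl, map_add, map_add] at h
    exact h
  have hsymm : ∀ x : X, P (B (Q x)) = Q (B (P x)) := by
    intro x
    exact add_right_cancel ((key1 x).trans (key2 x).symm)
  -- half inner product identity
  have hhalf : ∀ z w : X, P w = w → Q w = w → ⟪B z, w⟫ = (1 / 2 : ℝ) * ⟪z, w⟫ := by
    intro z w hPw hQw
    have hTw : T w = w + w := by
      show P w + Q w = w + w
      rw [hPw, hQw]
    have hEw : E w = w := hEfix w (Or.inl hPw)
    have c1 : (⟪B z, T w⟫ : ℝ) = 2 * ⟪B z, w⟫ := by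
      rw [hTw, inner_add_right]; ring
    have c2 : (⟪B z, T w⟫ : ℝ) = ⟪T (B z), w⟫ := (hTsa.isSymmetric (B z) w).symm
    have c3 : (⟪T (B z), w⟫ : ℝ) = ⟪E z, w⟫ := rfl
    have c4 : (⟪E z, w⟫ : ℝ) = ⟪z, E w⟫ := hEsa'.isSymmetric z w
    rw [hEw] at c4
    linarith
  -- conclusion
  ext x
  show (U ⊓ V).starProjection x = ((2 : ℝ) • (P ∘L B ∘L Q)) x
  have happ : ((2 : ℝ) • (P ∘L B ∘L Q)) x = (2 : ℝ) • P (B (Q x)) := rfl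
  rw [happ]
  apply Submodule.eq_starProjection_of_mem_of_inner_eq_zero
  · refine Submodule.mem_inf.mpr ⟨Submodule.smul_mem _ _ (proj_mem U _), ?_⟩
    rw [hsymm x]
    exact Submodule.smul_mem _ _ (proj_mem V _)
  · intro w hw
    obtain ⟨hwU, hwV⟩ := Submodule.mem_inf.mp hw
    have hPw : P w = w := proj_eq_self U hwU
    have hQw : Q w = w := proj_eq_self V hwV
    have e1 : (⟪(2 : ℝ) • P (B (Q x)), w⟫ : ℝ) = 2 * ⟪P (B (Q x)), w⟫ :=
      real_inner_smul_left _ _ _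
    have e2 : (⟪P (B (Q x)), w⟫ : ℝ) = ⟪B (Q x), P w⟫ := proj_symm U _ _
    have e3 : (⟪B (Q x), w⟫ : ℝ) = (1 / 2 : ℝ) * ⟪Q x, w⟫ := hhalf (Q x) w hPw hQw
    have e4 : (⟪Q x, w⟫ : ℝ) = ⟪x, Q w⟫ := proj_symm V _ _
    rw [inner_sub_left, e1, e2, hPw, e3, e4, hQw]
    ring
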